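/- Let C be the unique real root of C³ + 2C² − 32 = 0. For any δ, ε > 0, every point (u,v) with u, v ≥ 0 on the curve uv(u+v+2) = 8 + δ + ε satisfies u + v ≥ C. -/
import Mathlib


open Filter Topology

/-- let `C` be the unique real root of `C³ + 2C² − 32 = 0`. For any
`δ, ε > 0`, every nonnegative point on the curve `uv(u+v+2) = 8 + δ + ε`
satisfies `u + v ≥ C`. -/
theorem stmt15 (C : ℝ) (hC : C ^ 3 + 2 * C ^ 2 - 32 = 0)
    (hCuniq : ∀ x : ℝ, x ^ 3 + 2 * x ^ 2 - 32 = 0 → x = C)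
    (δ ε : ℝ) (hδ : 0 < δ) (hε : 0 < ε) :
    ∀ u v : ℝ, 0 ≤ u → 0 ≤ v → u * v * (u + v + 2) = 8 + δ + ε → C ≤ u + v := by
  intro u v hu hv heq
  have hCpos : 0 < C := by nlinarith [sq_nonneg C, sq_nonneg (C + 2), sq_nonneg (C - 2)]
  have hs : 32 < (u + v) ^ 3 + 2 * (u + v) ^ 2 := by
    nlinarith [sq_nonneg (u - v), sq_nonneg (u + v), mul_nonneg hu hv]
  by_contra h
  push_neg at h
  have hsnn : 0 ≤ u + v := by linarith
  have hd : 0 < C - (u + v) := by linarith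
  nlinarith [mul_nonneg (mul_nonneg hsnn hsnn) hd.le,
    mul_nonneg (mul_pos hCpos hCpos).le hd.le,
    mul_nonneg (mul_nonneg hCpos.le hsnn) hd.le,
    mul_nonneg hsnn hd.le, mul_nonneg hCpos.le hd.le]
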